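/- If H₊ has tail coefficient C_H ∈ (1,∞) and its residual distribution H_R satisfies sup_n n P(H₊ > n)/P(H_R > n) < ∞, then the tail coefficient of H_R equals C_H − 1. -/

import Mathlib

open MeasureTheory Filter

private lemma cast_rpow_add_one' (i : ℕ) (r : ℝ) (hr : 0 ≤ r) :
    ((i : ℝ)) ^ (r + 1) = (i : ℝ) ^ r * i := by
  rcases Nat.eq_zero_or_pos i with h | h
  · subst h
    simp [Real.zero_rpow (by linarith : r + 1 ≠ 0)]
  · rw [Real.rpow_add_one (by exact_mod_cast h.ne' : (i : ℝ) ≠ 0)]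

private lemma residual_key (p : ℕ → ℝ) (hp : ∀ n, 0 ≤ p n) (hp0 : p 0 = 0)
    (hP : Summable p) (M : ℝ) (hMpos : 0 < M) (q : ℕ → ℝ)
    (hq : ∀ k : ℕ, q k = if k = 0 then 0 else (∑' i, if k ≤ i then p i else 0) / M)
    (r : ℝ) (hr : 0 ≤ r) :
    (Summable fun k : ℕ => (k : ℝ) ^ r * q k) ↔
      Summable fun i : ℕ => (i : ℝ) ^ (r + 1) * p i := by
  set T : ℕ → ℝ := fun k => ∑' i, if k ≤ i then p i else 0 with hT
  have hTsumm : ∀ k : ℕ, Summable fun i : ℕ => if k ≤ i then p i else 0 := by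
    intro k
    refine hP.of_nonneg_of_le (fun i => ?_) (fun i => ?_) <;> split <;> simp [hp]
  have hq0 : ∀ k, 0 ≤ q k := by
    intro k
    rw [hq k]
    split
    · exact le_refl 0
    · exact div_nonneg (tsum_nonneg fun i => by split <;> simp [hp]) hMpos.le
  have hqM : ∀ k : ℕ, k ≠ 0 → q k * M = T k := by
    intro k hk
    rw [hq k, if_neg hk, div_mul_cancel₀ _ hMpos.ne']
  constructor
  · -- q-summable → p-summable
    intro hQ
    apply summable_of_sum_range_le
      (c := 2 ^ (r + 1) * (M * ∑' k : ℕ, (k : ℝ) ^ r * q k))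
    · intro i
      exact mul_nonneg (Real.rpow_nonneg (Nat.cast_nonneg i) _) (hp i)
    intro N
    have h2ne : (2 : ℝ) ^ (r + 1) ≠ 0 := (Real.rpow_pos_of_pos two_pos _).ne'
    -- pointwise bound
    have hA : ∀ i : ℕ, (i : ℝ) ^ (r + 1) * p i ≤
        2 ^ (r + 1) * (p i * ∑ k ∈ Finset.Icc 1 i, (k : ℝ) ^ r) := by
      intro i
      rcases Nat.eq_zero_or_pos i with hi | hi
      · subst hi; simp [hp0]
      have hcard : ((i : ℝ)) / 2 ≤ ((Finset.Ioc (i / 2) i).card : ℝ) := by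
        rw [Nat.card_Ioc]
        have : i ≤ 2 * (i - i / 2) := by omega
        have := (Nat.cast_le (α := ℝ)).mpr this
        push_cast at this
        linarith
      have hterm : ∀ k ∈ Finset.Ioc (i / 2) i, ((i : ℝ) / 2) ^ r ≤ (k : ℝ) ^ r := by
        intro k hk
        rcases Finset.mem_Ioc.mp hk with ⟨hk1, hk2⟩
        have : i < 2 * k := by omega
        have : (i : ℝ) < 2 * k := by exact_mod_cast this
        exact Real.rpow_le_rpow (by positivity) (by linarith) hr
      have hlow : ((i : ℝ) / 2) ^ r * ((i : ℝ) / 2) ≤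
          ∑ k ∈ Finset.Ioc (i / 2) i, (k : ℝ) ^ r := by
        calc ((i : ℝ) / 2) ^ r * ((i : ℝ) / 2)
            ≤ ((i : ℝ) / 2) ^ r * ((Finset.Ioc (i / 2) i).card : ℝ) := by
              have : (0:ℝ) ≤ ((i : ℝ) / 2) ^ r := by positivity
              nlinarith [hcard]
          _ = (Finset.Ioc (i / 2) i).card • ((i : ℝ) / 2) ^ r := by
              rw [nsmul_eq_mul]; ring
          _ ≤ ∑ k ∈ Finset.Ioc (i / 2) i, (k : ℝ) ^ r :=
              Finset.card_nsmul_le_sum _ _ _ hterm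
      have hsub : ∑ k ∈ Finset.Ioc (i / 2) i, (k : ℝ) ^ r ≤
          ∑ k ∈ Finset.Icc 1 i, (k : ℝ) ^ r := by
        apply Finset.sum_le_sum_of_subset_of_nonneg
        · intro k hk
          rcases Finset.mem_Ioc.mp hk with ⟨h1, h2⟩
          exact Finset.mem_Icc.mpr ⟨by omega, h2⟩
        · intro k _ _; positivity
      have hine : ((i : ℝ)) / 2 ≠ 0 := by positivity
      have key2 : (i : ℝ) ^ (r + 1) / 2 ^ (r + 1) ≤ ∑ k ∈ Finset.Icc 1 i, (k : ℝ) ^ r := by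
        rw [← Real.div_rpow (Nat.cast_nonneg i) (by norm_num : (0:ℝ) ≤ 2),
          Real.rpow_add_one hine r]
        exact hlow.trans hsub
      calc (i : ℝ) ^ (r + 1) * p i
          = 2 ^ (r + 1) * (p i * ((i : ℝ) ^ (r + 1) / 2 ^ (r + 1))) := by
            field_simp
        _ ≤ 2 ^ (r + 1) * (p i * ∑ k ∈ Finset.Icc 1 i, (k : ℝ) ^ r) := by
            apply mul_le_mul_of_nonneg_left _ (by positivity)
            exact mul_le_mul_of_nonneg_left key2 (hp i)
    -- double sum bound
    have hB : ∑ i ∈ Finset.range N, p i * ∑ k ∈ Finset.Icc 1 i, (k : ℝ) ^ r ≤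
        M * ∑' k : ℕ, (k : ℝ) ^ r * q k := by
      have hrw : ∀ i ∈ Finset.range N, p i * ∑ k ∈ Finset.Icc 1 i, (k : ℝ) ^ r =
          ∑ k ∈ Finset.range N, (if k ≠ 0 ∧ k ≤ i then (k : ℝ) ^ r * p i else 0) := by
        intro i hi
        have hiN : i < N := Finset.mem_range.mp hi
        have hfil : (Finset.range N).filter (fun k => k ≠ 0 ∧ k ≤ i) = Finset.Icc 1 i := by
          ext k
          simp only [Finset.mem_filter, Finset.mem_range, Finset.mem_Icc]
          omega
        calc p i * ∑ k ∈ Finset.Icc 1 i, (k : ℝ) ^ r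
            = ∑ k ∈ Finset.Icc 1 i, (k : ℝ) ^ r * p i := by
              rw [Finset.mul_sum]; exact Finset.sum_congr rfl fun k _ => mul_comm _ _
          _ = ∑ k ∈ Finset.range N, (if k ≠ 0 ∧ k ≤ i then (k : ℝ) ^ r * p i else 0) := by
              rw [← hfil, Finset.sum_filter]
      rw [Finset.sum_congr rfl hrw, Finset.sum_comm]
      have hk : ∀ k ∈ Finset.range N,
          ∑ i ∈ Finset.range N, (if k ≠ 0 ∧ k ≤ i then (k : ℝ) ^ r * p i else 0) ≤
            M * ((k : ℝ) ^ r * q k) := by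
        intro k _
        rcases eq_or_ne k 0 with rfl | hk0
        · simp [hq 0]
        · have heq : ∀ i : ℕ, (if k ≠ 0 ∧ k ≤ i then (k : ℝ) ^ r * p i else 0) =
              (k : ℝ) ^ r * (if k ≤ i then p i else 0) := by
            intro i
            by_cases h : k ≤ i
            · simp [h, hk0]
            · simp [h]
          rw [Finset.sum_congr rfl fun i _ => heq i, ← Finset.mul_sum]
          have hle : ∑ i ∈ Finset.range N, (if k ≤ i then p i else 0) ≤ T k :=
            Summable.sum_le_tsum _ (fun i _ => by split <;> simp [hp]) (hTsumm k)
          calc (k : ℝ) ^ r * ∑ i ∈ Finset.range N, (if k ≤ i then p i else 0)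
              ≤ (k : ℝ) ^ r * T k :=
                mul_le_mul_of_nonneg_left hle (Real.rpow_nonneg (Nat.cast_nonneg k) r)
            _ = M * ((k : ℝ) ^ r * q k) := by rw [← hqM k hk0]; ring
      calc ∑ k ∈ Finset.range N, ∑ i ∈ Finset.range N,
            (if k ≠ 0 ∧ k ≤ i then (k : ℝ) ^ r * p i else 0)
          ≤ ∑ k ∈ Finset.range N, M * ((k : ℝ) ^ r * q k) := Finset.sum_le_sum hk
        _ = M * ∑ k ∈ Finset.range N, (k : ℝ) ^ r * q k := by rw [Finset.mul_sum]
        _ ≤ M * ∑' k : ℕ, (k : ℝ) ^ r * q k := by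
            apply mul_le_mul_of_nonneg_left _ hMpos.le
            exact Summable.sum_le_tsum _
              (fun k _ => mul_nonneg (Real.rpow_nonneg (Nat.cast_nonneg k) r) (hq0 k)) hQ
    calc ∑ i ∈ Finset.range N, (i : ℝ) ^ (r + 1) * p i
        ≤ ∑ i ∈ Finset.range N, 2 ^ (r + 1) * (p i * ∑ k ∈ Finset.Icc 1 i, (k : ℝ) ^ r) :=
          Finset.sum_le_sum fun i _ => hA i
      _ = 2 ^ (r + 1) * ∑ i ∈ Finset.range N, p i * ∑ k ∈ Finset.Icc 1 i, (k : ℝ) ^ r := by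
          rw [Finset.mul_sum]
      _ ≤ 2 ^ (r + 1) * (M * ∑' k : ℕ, (k : ℝ) ^ r * q k) :=
          mul_le_mul_of_nonneg_left hB (by positivity)
  · -- p-summable → q-summable
    intro hS
    have hg_summ : ∀ k : ℕ, Summable fun i : ℕ =>
        (if k ≠ 0 ∧ k ≤ i then (k : ℝ) ^ r * p i else 0) := by
      intro k
      refine (hP.mul_left ((k : ℝ) ^ r)).of_nonneg_of_le (fun i => ?_) (fun i => ?_)
      · split
        · exact mul_nonneg (Real.rpow_nonneg (Nat.cast_nonneg k) r) (hp i)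
        · exact le_refl 0
      · split
        · exact le_refl _
        · exact mul_nonneg (Real.rpow_nonneg (Nat.cast_nonneg k) r) (hp i)
    have hg_eq : ∀ k : ℕ, (k : ℝ) ^ r * q k =
        (∑' i : ℕ, (if k ≠ 0 ∧ k ≤ i then (k : ℝ) ^ r * p i else 0)) / M := by
      intro k
      rcases eq_or_ne k 0 with rfl | hk0
      · simp [hq 0]
      · have heq : ∀ i : ℕ, (if k ≠ 0 ∧ k ≤ i then (k : ℝ) ^ r * p i else 0) =
            (k : ℝ) ^ r * (if k ≤ i then p i else 0) := by
          intro i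
          by_cases h : k ≤ i
          · simp [h, hk0]
          · simp [h]
        rw [tsum_congr heq, tsum_mul_left, hq k, if_neg hk0]
        ring
    have hinner : ∀ N : ℕ, ∀ i : ℕ,
        ∑ k ∈ Finset.range N, (if k ≠ 0 ∧ k ≤ i then (k : ℝ) ^ r * p i else 0) ≤
          (i : ℝ) ^ (r + 1) * p i := by
      intro N i
      calc ∑ k ∈ Finset.range N, (if k ≠ 0 ∧ k ≤ i then (k : ℝ) ^ r * p i else 0)
          ≤ ∑ k ∈ Finset.range N, (if k ≠ 0 ∧ k ≤ i then (i : ℝ) ^ r * p i else 0) := by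
            apply Finset.sum_le_sum
            intro k _
            split_ifs with h
            · exact mul_le_mul_of_nonneg_right
                (Real.rpow_le_rpow (Nat.cast_nonneg k) (by exact_mod_cast h.2) hr) (hp i)
            · exact le_refl 0
        _ = ((Finset.range N).filter (fun k => k ≠ 0 ∧ k ≤ i)).card • ((i : ℝ) ^ r * p i) := by
            rw [← Finset.sum_filter, Finset.sum_const]
        _ ≤ i • ((i : ℝ) ^ r * p i) := by
            apply smul_le_smul_of_nonneg_right _
              (mul_nonneg (Real.rpow_nonneg (Nat.cast_nonneg i) r) (hp i))
            have hss : (Finset.range N).filter (fun k => k ≠ 0 ∧ k ≤ i) ⊆ Finset.Icc 1 i := by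
              intro k hk
              simp only [Finset.mem_filter, Finset.mem_range] at hk
              exact Finset.mem_Icc.mpr ⟨by omega, hk.2.2⟩
            have := Finset.card_le_card hss
            rw [Nat.card_Icc] at this
            omega
        _ = (i : ℝ) ^ (r + 1) * p i := by
            rw [nsmul_eq_mul, cast_rpow_add_one' i r hr]; ring
    apply summable_of_sum_range_le (c := (∑' i : ℕ, (i : ℝ) ^ (r + 1) * p i) / M)
    · intro k
      exact mul_nonneg (Real.rpow_nonneg (Nat.cast_nonneg k) r) (hq0 k)
    intro N
    have hswap : ∑ k ∈ Finset.range N,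
        (∑' i : ℕ, (if k ≠ 0 ∧ k ≤ i then (k : ℝ) ^ r * p i else 0)) =
        ∑' i : ℕ, ∑ k ∈ Finset.range N, (if k ≠ 0 ∧ k ≤ i then (k : ℝ) ^ r * p i else 0) :=
      (Summable.tsum_finsetSum fun k _ => hg_summ k).symm
    have hsummLHS : Summable fun i : ℕ =>
        ∑ k ∈ Finset.range N, (if k ≠ 0 ∧ k ≤ i then (k : ℝ) ^ r * p i else 0) := by
      refine hS.of_nonneg_of_le (fun i => ?_) (fun i => hinner N i)
      apply Finset.sum_nonneg
      intro k _
      split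
      · exact mul_nonneg (Real.rpow_nonneg (Nat.cast_nonneg k) r) (hp i)
      · exact le_refl 0
    calc ∑ k ∈ Finset.range N, (k : ℝ) ^ r * q k
        = ∑ k ∈ Finset.range N,
            (∑' i : ℕ, (if k ≠ 0 ∧ k ≤ i then (k : ℝ) ^ r * p i else 0)) / M :=
          Finset.sum_congr rfl fun k _ => hg_eq k
      _ = (∑ k ∈ Finset.range N,
            ∑' i : ℕ, (if k ≠ 0 ∧ k ≤ i then (k : ℝ) ^ r * p i else 0)) / M := by
          rw [Finset.sum_div]
      _ = (∑' i : ℕ, ∑ k ∈ Finset.range N,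
            (if k ≠ 0 ∧ k ≤ i then (k : ℝ) ^ r * p i else 0)) / M := by rw [hswap]
      _ ≤ (∑' i : ℕ, (i : ℝ) ^ (r + 1) * p i) / M := by
          apply (div_le_div_iff_of_pos_right hMpos).mpr
          exact Summable.tsum_le_tsum (fun i => hinner N i) hsummLHS hS

/-- If `H₊` (pmf `p`, mean `M`) has tail coefficient `C_H ∈ (1,∞)`, and its residual
distribution `H_R` (pmf `q k = P(H₊ ≥ k)/M` for `k ≥ 1`) satisfies
`sup_n n P(H₊ > n)/P(H_R > n) < ∞`, then the tail coefficient of `H_R` equals `C_H - 1`. -/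
theorem residual_tail_coefficient
    (p : ℕ → ℝ) (M C_H : ℝ) (hp : ∀ n, 0 ≤ p n) (hp0 : p 0 = 0)
    (hsum : ∑' n, p n = 1) (hMsum : Summable fun n : ℕ => (n : ℝ) * p n)
    (hM : M = ∑' n : ℕ, (n : ℝ) * p n) (hMpos : 0 < M)
    (hC : 1 < C_H)
    (htc : sSup {c : EReal | ∃ r : ℝ, 0 ≤ r ∧ c = (r : EReal) ∧
        Summable fun k : ℕ => (k : ℝ) ^ r * p k} = (C_H : EReal))
    (q : ℕ → ℝ)
    (hq : ∀ k : ℕ, q k = if k = 0 then 0 else (∑' i, if k ≤ i then p i else 0) / M)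
    (hbound : ∃ K : ℝ, ∀ n : ℕ,
        (n : ℝ) * (∑' i, if n < i then p i else 0) ≤ K * (∑' i : ℕ, if n < i then q i else 0)) :
    sSup {c : EReal | ∃ r : ℝ, 0 ≤ r ∧ c = (r : EReal) ∧
        Summable fun k : ℕ => (k : ℝ) ^ r * q k} = ((C_H - 1 : ℝ) : EReal) := by
  have hP : Summable p := by
    by_contra h
    rw [tsum_eq_zero_of_not_summable h] at hsum
    norm_num at hsum
  have key := residual_key p hp hp0 hP M hMpos q hq
  have hdc : ∀ s r' : ℝ, 0 ≤ s → s ≤ r' →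
      (Summable fun k : ℕ => (k : ℝ) ^ r' * p k) →
      Summable fun k : ℕ => (k : ℝ) ^ s * p k := by
    intro s r' hs hsr hsum'
    refine hsum'.of_nonneg_of_le
      (fun k => mul_nonneg (Real.rpow_nonneg (Nat.cast_nonneg k) s) (hp k)) (fun k => ?_)
    rcases Nat.eq_zero_or_pos k with hk | hk
    · subst hk; simp [hp0]
    · exact mul_le_mul_of_nonneg_right
        (Real.rpow_le_rpow_of_exponent_le (by exact_mod_cast hk) hsr) (hp k)
  apply le_antisymm
  · apply sSup_le
    rintro c ⟨r, hr0, rfl, hsq⟩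
    have h1 : ((r + 1 : ℝ) : EReal) ≤ (C_H : EReal) := by
      rw [← htc]
      exact le_sSup ⟨r + 1, by linarith, rfl, (key r hr0).mp hsq⟩
    rw [EReal.coe_le_coe_iff] at h1 ⊢
    linarith
  · apply le_of_forall_lt
    intro c hc
    obtain ⟨x, hcx, hx⟩ := EReal.lt_iff_exists_real_btwn.mp hc
    rw [EReal.coe_lt_coe_iff] at hx
    set s : ℝ := max x 0 with hs
    have hs0 : 0 ≤ s := le_max_right _ _
    have hs1 : s + 1 < C_H := by
      rcases max_cases x 0 with ⟨h1, _⟩ | ⟨h1, _⟩ <;> rw [hs, h1] <;> linarith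
    have hex : ∃ r' : ℝ, 0 ≤ r' ∧ s + 1 ≤ r' ∧
        Summable fun k : ℕ => (k : ℝ) ^ r' * p k := by
      by_contra h
      push_neg at h
      have hle : sSup {c : EReal | ∃ r : ℝ, 0 ≤ r ∧ c = (r : EReal) ∧
          Summable fun k : ℕ => (k : ℝ) ^ r * p k} ≤ ((s + 1 : ℝ) : EReal) := by
        apply sSup_le
        rintro c' ⟨r', hr'0, rfl, hsum'⟩
        rw [EReal.coe_le_coe_iff]
        by_contra hlt
        push_neg at hlt
        exact h r' hr'0 hlt.le hsum'
      rw [htc, EReal.coe_le_coe_iff] at hle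
      linarith
    obtain ⟨r', hr'0, hr's, hsum'⟩ := hex
    have hps : Summable fun k : ℕ => (k : ℝ) ^ (s + 1) * p k :=
      hdc (s + 1) r' (by linarith) hr's hsum'
    have hqs : Summable fun k : ℕ => (k : ℝ) ^ s * q k := (key s hs0).mpr hps
    have hmem : ((s : ℝ) : EReal) ∈ {c : EReal | ∃ r : ℝ, 0 ≤ r ∧ c = (r : EReal) ∧
        Summable fun k : ℕ => (k : ℝ) ^ r * q k} := ⟨s, hs0, rfl, hqs⟩
    calc c < (x : EReal) := hcx
      _ ≤ ((s : ℝ) : EReal) := EReal.coe_le_coe_iff.mpr (le_max_left _ _)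
      _ ≤ _ := le_sSup hmem
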